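/- (Power-type error: lower Hermite–Hadamard.) Let D be a convex subset of a real normed space X and ν a σ-finite Borel measure on [0,∞)² such that ∫ s^{p+q−1}/(2^{p+q−1}(p+1)(q+1)) dν(p,q) exists in [−∞,∞] for each s = ‖x−y‖ with x ≠ y in D. Assume f : D → ℝ is hemi-Lebesgue integrable and satisfies f((1−t)x+ty) ≤ (1−t)f(x) + t f(y) + ∫_{[0,∞)²} t^p (1−t)^q ‖x−y‖^{p+q−1} dν(p,q) for all x ≠ y in D and t ∈ [0,1]. Then f((x+y)/2) ≤ ∫₀¹ f((1−t)x+ty) dt + ∫_{[0,∞)²} ‖x−y‖^{p+q−1}/(2^{p+q−1}(p+1)(q+1)) dν(p,q) for all x ≠ y in D. -/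

import Mathlib

open MeasureTheory intervalIntegral Real

lemma measurable_rpow2' : Measurable (fun w : ℝ × ℝ => w.1 ^ w.2) := by
  have heq : (fun w : ℝ × ℝ => w.1 ^ w.2) = fun w : ℝ × ℝ =>
      if w.1 = 0 then (if w.2 = 0 then (1:ℝ) else 0)
      else Real.exp (Real.log w.1 * w.2) * (if w.1 < 0 then Real.cos (w.2 * π) else 1) := by
    funext w
    rcases lt_trichotomy w.1 0 with h | h | h
    · rw [if_neg h.ne, if_pos h, Real.rpow_def_of_neg h]
    · rw [h, Real.rpow_def_of_nonpos le_rfl]; simp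
    · rw [if_neg h.ne', if_neg (not_lt.mpr h.le), mul_one, Real.rpow_def_of_pos h]
  rw [heq]
  have h1 : MeasurableSet {w : ℝ × ℝ | w.1 = 0} := measurable_fst (measurableSet_singleton 0)
  have h2 : MeasurableSet {w : ℝ × ℝ | w.2 = 0} := measurable_snd (measurableSet_singleton 0)
  have h3 : MeasurableSet {w : ℝ × ℝ | w.1 < 0} :=
    measurableSet_lt measurable_fst measurable_const
  exact Measurable.ite h1 (Measurable.ite h2 measurable_const measurable_const)
    ((Real.measurable_exp.comp ((Real.measurable_log.comp measurable_fst).mul measurable_snd)).mul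
      (Measurable.ite h3 (Real.measurable_cos.comp (measurable_snd.mul measurable_const))
        measurable_const))

lemma Measurable.rpow2' {α : Type*} [MeasurableSpace α] {f g : α → ℝ}
    (hf : Measurable f) (hg : Measurable g) : Measurable (fun a => f a ^ g a) :=
  measurable_rpow2'.comp (hf.prodMk hg)

set_option maxHeartbeats 1000000 in
/-- power-type error, lower Hermite–Hadamard: if
`f((1−t)x+ty) ≤ (1−t)f(x)+tf(y) + ∫ t^p(1−t)^q‖x−y‖^{p+q−1} dν(p,q)`, then
`f((x+y)/2) ≤ ∫₀¹ f((1−t)x+ty) dt + ∫ ‖x−y‖^{p+q−1}/(2^{p+q−1}(p+1)(q+1)) dν(p,q)`. -/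
theorem approx_lower_hh_power_error
    {X : Type*} [NormedAddCommGroup X] [NormedSpace ℝ X]
    (D : Set X) (hD : Convex ℝ D)
    (ν : Measure (ℝ × ℝ)) [SigmaFinite ν]
    -- ν is a Borel measure concentrated on [0,∞)²
    (hν : ν {pq : ℝ × ℝ | ¬ (0 ≤ pq.1 ∧ 0 ≤ pq.2)} = 0)
    (f : X → ℝ)
    -- hemi-Lebesgue integrability of f
    (hf : ∀ x ∈ D, ∀ y ∈ D,
        IntervalIntegrable (fun t => f ((1 - t) • x + t • y)) volume 0 1)
    -- existence (integrability) of the error integrals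
    (herr : ∀ x ∈ D, ∀ y ∈ D, x ≠ y → ∀ t ∈ Set.Icc (0:ℝ) 1,
        Integrable (fun pq : ℝ × ℝ =>
          t ^ pq.1 * (1 - t) ^ pq.2 * ‖x - y‖ ^ (pq.1 + pq.2 - 1)) ν)
    (hJ : ∀ x ∈ D, ∀ y ∈ D, x ≠ y →
        Integrable (fun pq : ℝ × ℝ =>
          ‖x - y‖ ^ (pq.1 + pq.2 - 1) /
            ((2:ℝ) ^ (pq.1 + pq.2 - 1) * (pq.1 + 1) * (pq.2 + 1))) ν)
    -- approximate convexity with power-type error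
    (hconv : ∀ x ∈ D, ∀ y ∈ D, x ≠ y → ∀ t ∈ Set.Icc (0:ℝ) 1,
        f ((1 - t) • x + t • y) ≤ (1 - t) * f x + t * f y +
          ∫ pq : ℝ × ℝ,
            t ^ pq.1 * (1 - t) ^ pq.2 * ‖x - y‖ ^ (pq.1 + pq.2 - 1) ∂ν) :
    ∀ x ∈ D, ∀ y ∈ D, x ≠ y →
      f ((2⁻¹ : ℝ) • (x + y)) ≤
        (∫ t in (0:ℝ)..1, f ((1 - t) • x + t • y)) +
        ∫ pq : ℝ × ℝ,
          ‖x - y‖ ^ (pq.1 + pq.2 - 1) /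
            ((2:ℝ) ^ (pq.1 + pq.2 - 1) * (pq.1 + 1) * (pq.2 + 1)) ∂ν := by
  intro x hx y hy hxy
  have hs : (0:ℝ) < ‖x - y‖ := norm_pos_iff.mpr (sub_ne_zero.mpr hxy)
  set s : ℝ := ‖x - y‖ with hs_def
  set m : X := (2⁻¹ : ℝ) • (x + y) with hm_def
  have hm : m ∈ D := by
    have h1 : m = (2⁻¹:ℝ) • x + (2⁻¹:ℝ) • y := by rw [hm_def, smul_add]
    rw [h1]; exact hD hx hy (by norm_num) (by norm_num) (by norm_num)
  set F₁ : ℝ → ℝ := fun t => f ((1 - t) • m + t • x) with hF₁_def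
  set F₂ : ℝ → ℝ := fun u => f ((1 - u) • m + u • y) with hF₂_def
  set I : Set ℝ := Set.Ioo 0 1 with hI_def
  set μI : Measure ℝ := volume.restrict I with hμI_def
  set P : Measure (ℝ × ℝ) := μI.prod μI with hP_def
  set g : ℝ → ℝ → ℝ × ℝ → ℝ := fun t u pq =>
    t ^ pq.1 * u ^ pq.2 * (s ^ (pq.1 + pq.2 - 1) * (2:ℝ) ^ (1 - (pq.1 + pq.2))) with hg_def
  set φ : ℝ × ℝ → ℝ := fun w => ∫ pq, g w.1 w.2 pq ∂ν with hφ_def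
  set h : ℝ × ℝ → ℝ := fun pq =>
    s ^ (pq.1 + pq.2 - 1) / ((2:ℝ) ^ (pq.1 + pq.2 - 1) * (pq.1 + 1) * (pq.2 + 1)) with hh_def
  have hJint : Integrable h ν := hJ x hx y hy hxy
  -- ====== key pointwise inequality ======
  have key : ∀ t ∈ I, ∀ u ∈ I,
      Integrable (g t u) ν ∧
      t * f m + f m * u ≤ F₁ t * u + t * F₂ u + φ (t, u) := by
    rintro t ⟨ht0, ht1⟩ u ⟨hu0, hu1⟩
    have htu : (0:ℝ) < t + u := by linarith
    set x' : X := (1 - t) • m + t • x with hx'_def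
    set y' : X := (1 - u) • m + u • y with hy'_def
    have hx'D : x' ∈ D := hD hm hx (by linarith) ht0.le (by ring)
    have hy'D : y' ∈ D := hD hm hy (by linarith) hu0.le (by ring)
    have hsub : x' - y' = ((t+u)/2) • (x - y) := by
      rw [hx'_def, hy'_def, hm_def]; match_scalars <;> ring
    have hne' : x' ≠ y' := by
      intro hcon
      have h0 : ((t+u)/2) • (x - y) = 0 := by rw [← hsub, hcon, sub_self]
      rcases smul_eq_zero.mp h0 with h' | h'
      · exact absurd h' (by positivity)
      · exact hxy (sub_eq_zero.mp h')
    have hnorm : ‖x' - y'‖ = (t+u)/2 * s := by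
      rw [hsub, norm_smul, Real.norm_eq_abs, abs_of_pos (by positivity), hs_def]
    set l : ℝ := t / (t+u) with hl_def
    have hl : l ∈ Set.Icc (0:ℝ) 1 := ⟨by positivity, by rw [hl_def, div_le_one htu]; linarith⟩
    have hl1 : 1 - l = u / (t+u) := by rw [hl_def]; field_simp; ring
    have hg_eq : ∀ pq : ℝ × ℝ,
        (t+u) * (l ^ pq.1 * (1-l) ^ pq.2 * ‖x' - y'‖ ^ (pq.1 + pq.2 - 1)) = g t u pq := by
      rintro ⟨p, q⟩
      rw [hg_def, hnorm, hl1, hl_def]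
      show (t+u) * ((t/(t+u)) ^ p * (u/(t+u)) ^ q * ((t+u)/2 * s) ^ (p + q - 1))
        = t ^ p * u ^ q * (s ^ (p+q-1) * (2:ℝ) ^ (1-(p+q)))
      rw [Real.div_rpow ht0.le htu.le, Real.div_rpow hu0.le htu.le,
        Real.mul_rpow (by positivity) hs.le, Real.div_rpow htu.le (by norm_num)]
      rw [show p + q - 1 = p + q + (-1) by ring, Real.rpow_add htu, Real.rpow_add htu,
        Real.rpow_neg_one, show (1:ℝ) - (p+q) = (-(p+q-1)) by ring,
        Real.rpow_neg (by norm_num : (0:ℝ) ≤ 2)]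
      have h1 : (t+u) ^ p ≠ 0 := (Real.rpow_pos_of_pos htu p).ne'
      have h2 : (t+u) ^ q ≠ 0 := (Real.rpow_pos_of_pos htu q).ne'
      have h3 : (2:ℝ) ^ (p+q-1) ≠ 0 := (Real.rpow_pos_of_pos (by norm_num) _).ne'
      rw [show p + q - 1 = p + q + (-1) by ring,
        Real.rpow_add (by norm_num : (0:ℝ) < 2)] at h3 ⊢
      field_simp
    have hEint : Integrable
        (fun pq : ℝ × ℝ => l ^ pq.1 * (1-l) ^ pq.2 * ‖x' - y'‖ ^ (pq.1 + pq.2 - 1)) ν :=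
      herr x' hx'D y' hy'D hne' l hl
    have hgint : Integrable (g t u) ν :=
      (hEint.const_mul (t+u)).congr (Filter.Eventually.of_forall hg_eq)
    refine ⟨hgint, ?_⟩
    have hmid : (1 - l) • x' + l • y' = m := by
      rw [hx'_def, hy'_def, hm_def, hl_def]
      match_scalars <;> field_simp <;> ring
    have hkey := hconv x' hx'D y' hy'D hne' l hl
    rw [hmid] at hkey
    have hmul := mul_le_mul_of_nonneg_left hkey htu.le
    have hIeq : (t+u) * ∫ pq, l ^ pq.1 * (1-l) ^ pq.2 * ‖x' - y'‖ ^ (pq.1 + pq.2 - 1) ∂ν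
        = ∫ pq, g t u pq ∂ν := by
      rw [← MeasureTheory.integral_const_mul]
      exact integral_congr_ae (Filter.Eventually.of_forall hg_eq)
    have e1 : (t+u) * l = t := by rw [hl_def]; field_simp
    have e2 : (t+u) * (1-l) = u := by rw [hl1]; field_simp
    calc t * f m + f m * u = (t+u) * f m := by ring
      _ ≤ (t+u) * ((1-l) * f x' + l * f y'
            + ∫ pq, l ^ pq.1 * (1-l) ^ pq.2 * ‖x' - y'‖ ^ (pq.1 + pq.2 - 1) ∂ν) := hmul
      _ = f x' * u + t * f y' + ∫ pq, g t u pq ∂ν := by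
          rw [← hIeq]; linear_combination (f x') * e2 + (f y') * e1
  -- ====== a.e. facts ======
  have haeP : ∀ᵐ w ∂P, w ∈ I ×ˢ I := by
    rw [hP_def, hμI_def, Measure.prod_restrict]
    exact ae_restrict_mem (measurableSet_Ioo.prod measurableSet_Ioo)
  have haeν : ∀ᵐ pq ∂ν, 0 ≤ pq.1 ∧ 0 ≤ pq.2 := by
    rw [MeasureTheory.ae_iff]; exact hν
  -- ====== measurability and nonnegativity ======
  have hGmeas : Measurable (fun w : (ℝ × ℝ) × (ℝ × ℝ) => g w.1.1 w.1.2 w.2) := by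
    rw [hg_def]
    exact ((measurable_fst.fst.rpow2' measurable_snd.fst).mul
      (measurable_fst.snd.rpow2' measurable_snd.snd)).mul
      ((measurable_const.rpow2' ((measurable_snd.fst.add measurable_snd.snd).sub
          measurable_const)).mul
        (measurable_const.rpow2' (measurable_const.sub
          (measurable_snd.fst.add measurable_snd.snd))))
  have hφmeas : AEStronglyMeasurable φ P := by
    rw [hφ_def]
    exact (hGmeas.stronglyMeasurable.integral_prod_right').aestronglyMeasurable
  have hgnn : ∀ t ∈ I, ∀ u ∈ I, ∀ pq : ℝ × ℝ, 0 ≤ g t u pq := by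
    rintro t ⟨ht0, _⟩ u ⟨hu0, _⟩ pq
    rw [hg_def]
    have := hs
    positivity
  have hφnn : ∀ᵐ w ∂P, 0 ≤ φ w := by
    filter_upwards [haeP] with w hw
    rw [hφ_def]
    exact integral_nonneg (hgnn w.1 hw.1 w.2 hw.2)
  have hhnn : ∀ᵐ pq ∂ν, 0 ≤ h pq := by
    filter_upwards [haeν] with pq ⟨hp, hq⟩
    rw [hh_def]
    have h2pos : (0:ℝ) < 2 ^ (pq.1 + pq.2 - 1) := Real.rpow_pos_of_pos (by norm_num) _
    positivity
  -- ====== value of the inner double integrals ======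
  have hinner : ∀ pq : ℝ × ℝ, 0 ≤ pq.1 → 0 ≤ pq.2 →
      Integrable (fun w : ℝ × ℝ => g w.1 w.2 pq) P ∧
      ∫ w : ℝ × ℝ, g w.1 w.2 pq ∂P = h pq := by
    rintro ⟨p, q⟩ hp hq
    set c : ℝ := s ^ (p + q - 1) * (2:ℝ) ^ (1 - (p + q)) with hc_def
    have h1 : Integrable (fun t : ℝ => t ^ p) μI :=
      (intervalIntegrable_rpow (a := 0) (b := 1) (Or.inl hp)).1.mono_set Set.Ioo_subset_Ioc_self
    have h2 : Integrable (fun u : ℝ => u ^ q * c) μI :=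
      ((intervalIntegrable_rpow (a := 0) (b := 1) (Or.inl hq)).1.mono_set
        Set.Ioo_subset_Ioc_self).mul_const c
    have hprod : Integrable (fun w : ℝ × ℝ => w.1 ^ p * (w.2 ^ q * c)) P := h1.mul_prod h2
    have hgeq : (fun w : ℝ × ℝ => g w.1 w.2 (p, q)) =
        fun w : ℝ × ℝ => w.1 ^ p * (w.2 ^ q * c) := by
      funext w; rw [hg_def]; ring
    have hip : ∫ t : ℝ, t ^ p ∂μI = 1 / (p + 1) := by
      rw [hμI_def, hI_def, ← integral_Ioc_eq_integral_Ioo,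
        ← intervalIntegral.integral_of_le zero_le_one,
        integral_rpow (Or.inl (by linarith : (-1:ℝ) < p)),
        Real.one_rpow, Real.zero_rpow (by linarith : p + 1 ≠ 0)]
      norm_num
    have hiq : ∫ u : ℝ, u ^ q ∂μI = 1 / (q + 1) := by
      rw [hμI_def, hI_def, ← integral_Ioc_eq_integral_Ioo,
        ← intervalIntegral.integral_of_le zero_le_one,
        integral_rpow (Or.inl (by linarith : (-1:ℝ) < q)),
        Real.one_rpow, Real.zero_rpow (by linarith : q + 1 ≠ 0)]
      norm_num
    refine ⟨hprod.congr (Filter.EventuallyEq.symm (Filter.Eventually.of_forall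
      (fun w => by rw [hgeq]))), ?_⟩
    calc ∫ w : ℝ × ℝ, g w.1 w.2 (p, q) ∂P
        = ∫ w : ℝ × ℝ, w.1 ^ p * (w.2 ^ q * c) ∂P := by rw [hgeq]
      _ = (∫ t : ℝ, t ^ p ∂μI) * ∫ u : ℝ, u ^ q * c ∂μI := by
          rw [hP_def]
          exact integral_prod_mul (L := ℝ) (fun t : ℝ => t ^ p) (fun u : ℝ => u ^ q * c)
      _ = (1 / (p + 1)) * ((1 / (q + 1)) * c) := by
          rw [hip, MeasureTheory.integral_mul_const (c) (fun u : ℝ => u ^ q), hiq]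
      _ = h (p, q) := by
          rw [hh_def, hc_def]
          have h2pos : (0:ℝ) < 2 ^ (p + q - 1) := Real.rpow_pos_of_pos (by norm_num) _
          have hD' : (2:ℝ) ^ (p + q - 1) * (p + 1) * (q + 1) ≠ 0 := by
            apply mul_ne_zero (mul_ne_zero h2pos.ne' _) <;> intro hcon <;> nlinarith
          rw [show (1:ℝ) - (p + q) = -(p + q - 1) by ring,
            Real.rpow_neg (by norm_num : (0:ℝ) ≤ 2), eq_div_iff hD']
          field_simp
  -- ====== the Tonelli step ======
  have hLφ : ∫⁻ w, ENNReal.ofReal (φ w) ∂P = ENNReal.ofReal (∫ pq, h pq ∂ν) := by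
    have hGae : AEMeasurable (fun z : (ℝ × ℝ) × (ℝ × ℝ) =>
        ENNReal.ofReal (g z.1.1 z.1.2 z.2)) (P.prod ν) :=
      (ENNReal.measurable_ofReal.comp hGmeas).aemeasurable
    calc ∫⁻ w, ENNReal.ofReal (φ w) ∂P
        = ∫⁻ w, ∫⁻ pq, ENNReal.ofReal (g w.1 w.2 pq) ∂ν ∂P := by
          refine lintegral_congr_ae ?_
          filter_upwards [haeP] with w hw
          rw [hφ_def]
          exact ofReal_integral_eq_lintegral_ofReal (key w.1 hw.1 w.2 hw.2).1
            (Filter.Eventually.of_forall (hgnn w.1 hw.1 w.2 hw.2))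
      _ = ∫⁻ pq, ∫⁻ w, ENNReal.ofReal (g w.1 w.2 pq) ∂P ∂ν :=
          lintegral_lintegral_swap hGae
      _ = ∫⁻ pq, ENNReal.ofReal (h pq) ∂ν := by
          refine lintegral_congr_ae ?_
          filter_upwards [haeν] with pq ⟨hp, hq⟩
          obtain ⟨hint, heq⟩ := hinner pq hp hq
          rw [← heq]
          refine (ofReal_integral_eq_lintegral_ofReal hint ?_).symm
          filter_upwards [haeP] with w hw
          exact hgnn w.1 hw.1 w.2 hw.2 pq
      _ = ENNReal.ofReal (∫ pq, h pq ∂ν) :=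
          (ofReal_integral_eq_lintegral_ofReal hJint hhnn).symm
  have hφint : Integrable φ P := by
    refine ⟨hφmeas, ?_⟩
    rw [hasFiniteIntegral_iff_norm]
    have hnrm : ∫⁻ w, ENNReal.ofReal ‖φ w‖ ∂P = ∫⁻ w, ENNReal.ofReal (φ w) ∂P := by
      refine lintegral_congr_ae ?_
      filter_upwards [hφnn] with w hw
      rw [Real.norm_eq_abs, abs_of_nonneg hw]
    rw [hnrm, hLφ]
    exact ENNReal.ofReal_lt_top
  have hφle : ∫ w, φ w ∂P ≤ ∫ pq, h pq ∂ν := by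
    have hT0 : 0 ≤ ∫ pq, h pq ∂ν := integral_nonneg_of_ae hhnn
    rw [integral_eq_lintegral_of_nonneg_ae hφnn hφmeas, hLφ, ENNReal.toReal_ofReal hT0]
  -- ====== 1-D integrability ======
  have hid : Integrable (fun t : ℝ => t) μI :=
    (intervalIntegrable_id (μ := volume) (a := 0) (b := 1)).1.mono_set Set.Ioo_subset_Ioc_self
  have hF₁i : Integrable F₁ μI := (hf m hm x hx).1.mono_set Set.Ioo_subset_Ioc_self
  have hF₂i : Integrable F₂ μI := (hf m hm y hy).1.mono_set Set.Ioo_subset_Ioc_self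
  have hIvol : μI Set.univ = 1 := by
    rw [hμI_def, Measure.restrict_apply_univ, hI_def, Real.volume_Ioo]; norm_num
  have hintid : ∫ t : ℝ, t ∂μI = 1/2 := by
    rw [hμI_def, hI_def, ← integral_Ioc_eq_integral_Ioo,
      ← intervalIntegral.integral_of_le zero_le_one, integral_id]; norm_num
  have hconst : ∀ c : ℝ, ∫ _ : ℝ, c ∂μI = c := by
    intro c; rw [MeasureTheory.integral_const, measureReal_def, hIvol]; simp
  -- ====== integrate key over the unit square ======
  have hAint : Integrable (fun w : ℝ × ℝ => w.1 * f m + f m * w.2) P :=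
    (hid.mul_prod (integrable_const (f m))).add ((integrable_const (f m)).mul_prod hid)
  have hBint : Integrable (fun w : ℝ × ℝ => F₁ w.1 * w.2 + w.1 * F₂ w.2 + φ w) P :=
    ((hF₁i.mul_prod hid).add (hid.mul_prod hF₂i)).add hφint
  have main : ∫ w : ℝ × ℝ, (w.1 * f m + f m * w.2) ∂P ≤
      ∫ w : ℝ × ℝ, (F₁ w.1 * w.2 + w.1 * F₂ w.2 + φ w) ∂P := by
    refine integral_mono_ae hAint hBint ?_
    filter_upwards [haeP] with w hw
    exact (key w.1 hw.1 w.2 hw.2).2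
  have hA1 : Integrable (fun w : ℝ × ℝ => w.1 * f m) P :=
    hid.mul_prod (integrable_const (f m))
  have hA2 : Integrable (fun w : ℝ × ℝ => f m * w.2) P :=
    (integrable_const (f m)).mul_prod hid
  have hB1 : Integrable (fun w : ℝ × ℝ => F₁ w.1 * w.2) P := hF₁i.mul_prod hid
  have hB2 : Integrable (fun w : ℝ × ℝ => w.1 * F₂ w.2) P := hid.mul_prod hF₂i
  have eA1 : ∫ w : ℝ × ℝ, w.1 * f m ∂P = (1/2) * f m := by
    have e := integral_prod_mul (L := ℝ) (μ := μI) (ν := μI)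
      (fun t : ℝ => t) (fun _ : ℝ => f m)
    beta_reduce at e
    rw [hP_def, e, hintid, hconst]
  have eA2 : ∫ w : ℝ × ℝ, f m * w.2 ∂P = f m * (1/2) := by
    have e := integral_prod_mul (L := ℝ) (μ := μI) (ν := μI)
      (fun _ : ℝ => f m) (fun u : ℝ => u)
    beta_reduce at e
    rw [hP_def, e, hintid, hconst]
  have eB1 : ∫ w : ℝ × ℝ, F₁ w.1 * w.2 ∂P = (∫ t : ℝ, F₁ t ∂μI) * (1/2) := by
    have e := integral_prod_mul (L := ℝ) (μ := μI) (ν := μI) F₁ (fun u : ℝ => u)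
    beta_reduce at e
    rw [hP_def, e, hintid]
  have eB2 : ∫ w : ℝ × ℝ, w.1 * F₂ w.2 ∂P = (1/2) * ∫ u : ℝ, F₂ u ∂μI := by
    have e := integral_prod_mul (L := ℝ) (μ := μI) (ν := μI) (fun t : ℝ => t) F₂
    beta_reduce at e
    rw [hP_def, e, hintid]
  have hLHS : ∫ w : ℝ × ℝ, (w.1 * f m + f m * w.2) ∂P = f m := by
    rw [integral_add hA1 hA2, eA1, eA2]; ring
  have hRHS : ∫ w : ℝ × ℝ, (F₁ w.1 * w.2 + w.1 * F₂ w.2 + φ w) ∂P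
      = (1/2) * (∫ t : ℝ, F₁ t ∂μI) + (1/2) * (∫ u : ℝ, F₂ u ∂μI) + ∫ w, φ w ∂P := by
    have hB12 : Integrable (fun w : ℝ × ℝ => F₁ w.1 * w.2 + w.1 * F₂ w.2) P := hB1.add hB2
    rw [integral_add hB12 hφint, integral_add hB1 hB2, eB1, eB2]
    ring
  -- ====== reparametrize the two half integrals ======
  have hsplit : (1/2) * (∫ t : ℝ, F₁ t ∂μI) + (1/2) * (∫ u : ℝ, F₂ u ∂μI)
      = ∫ t in (0:ℝ)..1, f ((1 - t) • x + t • y) := by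
    have hFint := hf x hx y hy
    have hsub1 : Set.uIcc (0:ℝ) (1/2) ⊆ Set.uIcc (0:ℝ) 1 := by
      rw [Set.uIcc_of_le (by norm_num : (0:ℝ) ≤ 1/2), Set.uIcc_of_le zero_le_one]
      exact Set.Icc_subset_Icc le_rfl (by norm_num)
    have hsub2 : Set.uIcc (1/2:ℝ) 1 ⊆ Set.uIcc (0:ℝ) 1 := by
      rw [Set.uIcc_of_le (by norm_num : (1/2:ℝ) ≤ 1), Set.uIcc_of_le zero_le_one]
      exact Set.Icc_subset_Icc (by norm_num) le_rfl
    have hFi1 : IntervalIntegrable (fun t => f ((1 - t) • x + t • y)) volume 0 (1/2) :=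
      hFint.mono_set hsub1
    have hFi2 : IntervalIntegrable (fun t => f ((1 - t) • x + t • y)) volume (1/2) 1 :=
      hFint.mono_set hsub2
    have e₁ : ∫ t : ℝ, F₁ t ∂μI
        = 2 * ∫ t in (0:ℝ)..(1/2:ℝ), f ((1 - t) • x + t • y) := by
      rw [hμI_def, hI_def, ← integral_Ioc_eq_integral_Ioo,
        ← intervalIntegral.integral_of_le zero_le_one]
      have hfe : F₁ = fun t : ℝ => f ((1 - (1/2 - 1/2*t)) • x + (1/2 - 1/2*t) • y) := by
        funext t; rw [hF₁_def]
        show f _ = f _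
        congr 1
        rw [hm_def]; match_scalars <;> ring
      have e := integral_comp_sub_mul (a := 0) (b := 1)
        (fun c : ℝ => f ((1 - c) • x + c • y)) (by norm_num : (1/2:ℝ) ≠ 0) (1/2)
      beta_reduce at e
      rw [hfe, e]
      norm_num
    have e₂ : ∫ u : ℝ, F₂ u ∂μI
        = 2 * ∫ t in (1/2:ℝ)..(1:ℝ), f ((1 - t) • x + t • y) := by
      rw [hμI_def, hI_def, ← integral_Ioc_eq_integral_Ioo,
        ← intervalIntegral.integral_of_le zero_le_one]
      have hfe : F₂ = fun u : ℝ => f ((1 - (1/2 + 1/2*u)) • x + (1/2 + 1/2*u) • y) := by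
        funext u; rw [hF₂_def]
        show f _ = f _
        congr 1
        rw [hm_def]; match_scalars <;> ring
      have e := integral_comp_add_mul (a := 0) (b := 1)
        (fun c : ℝ => f ((1 - c) • x + c • y)) (by norm_num : (1/2:ℝ) ≠ 0) (1/2)
      beta_reduce at e
      rw [hfe, e]
      norm_num
    rw [e₁, e₂, ← intervalIntegral.integral_add_adjacent_intervals hFi1 hFi2]
    ring
  calc f m = ∫ w : ℝ × ℝ, (w.1 * f m + f m * w.2) ∂P := hLHS.symm
    _ ≤ ∫ w : ℝ × ℝ, (F₁ w.1 * w.2 + w.1 * F₂ w.2 + φ w) ∂P := main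
    _ = (1/2) * (∫ t : ℝ, F₁ t ∂μI) + (1/2) * (∫ u : ℝ, F₂ u ∂μI) + ∫ w, φ w ∂P := hRHS
    _ ≤ (∫ t in (0:ℝ)..1, f ((1 - t) • x + t • y)) + ∫ pq, h pq ∂ν := by
        rw [hsplit]; exact add_le_add le_rfl hφle
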